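/- Let r ≥ 2 be a non-square integer, α = √r, s = ⌊α⌋, β = α - s, and N(r) = #{1 ≤ j ≤ r-1 : {j/α} < β}. Then N(r) < rβ + s - 1. -/

import Mathlib

open Real Finset


lemma count_small (s n t v : ℤ) (hs : 1 ≤ s) (hn : n = 2*s+1) (hv : 0 ≤ v) :
    (((Finset.Icc (1:ℤ) s).filter (fun m => n - m*t % n ≤ v)).card : ℤ) ≤ v := by
  have hn0 : (0:ℤ) < n := by omega
  set d : ℤ := (Int.gcd t n : ℤ) with hd
  have hd0 : 0 < d := by
    have : Int.gcd t n ≠ 0 := by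
      simp [Int.gcd_eq_zero_iff]; intro _; omega
    positivity
  have hdt : d ∣ t := Int.gcd_dvd_left t n
  have hdn : d ∣ n := Int.gcd_dvd_right t n
  obtain ⟨n', hn'⟩ := hdn
  obtain ⟨t', ht'⟩ := hdt
  have hoddn : Odd n := ⟨s, by omega⟩
  have hodd2 : Odd d ∧ Odd n' := (Int.odd_mul).mp (hn' ▸ hoddn)
  obtain ⟨a, ha⟩ := hodd2.1
  obtain ⟨b, hb⟩ := hodd2.2
  have hn'0 : 0 < n' := by nlinarith
  have ha0 : 0 ≤ a := by omega
  have hb0 : 0 ≤ b := by omega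
  have hseq : s = a * n' + b := by
    have h : 2*s+1 = d * n' := by omega
    rw [ha, hb] at h
    have h2 : 2*s = 2*(a*(2*b+1)+b) := by linear_combination h
    rw [hb]; linarith
  -- gcd of quotients is 1
  have ht'd : t' = t / d := by rw [ht']; exact (Int.mul_ediv_cancel_left _ hd0.ne').symm
  have hn'd : n' = n / d := by rw [hn']; exact (Int.mul_ediv_cancel_left _ hd0.ne').symm
  have hcop : IsCoprime n' t' := by
    rw [Int.isCoprime_iff_gcd_eq_one, ht'd, hn'd, hd]
    have hgpos : 0 < Int.gcd t n := Nat.pos_of_ne_zero (by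
      simp only [ne_eq, Int.gcd_eq_zero_iff, not_and]
      intro _; omega)
    rw [Int.gcd_comm]
    exact Int.gcd_div_gcd_div_gcd hgpos
  -- the injection
  have hvd0 : 0 ≤ v / d := Int.ediv_nonneg hv hd0.le
  have hcard : ((Finset.Icc (1:ℤ) s).filter (fun m => n - m*t % n ≤ v)).card ≤
      ((Finset.Icc (n' - v/d) (n' - 1)) ×ˢ (Finset.Icc (0:ℤ) a)).card := by
    apply Finset.card_le_card_of_injOn (fun m => ((m*t % n)/d, m/n'))
    · intro m hm
      simp only [Finset.mem_coe, Finset.mem_filter, Finset.mem_Icc] at hm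
      obtain ⟨⟨hm1, hm2⟩, hm3⟩ := hm
      have hdvd : d ∣ m*t % n := by
        have h1 : d ∣ m*t := Dvd.dvd.mul_left ⟨t', ht'⟩ m
        rw [Int.emod_def]
        exact dvd_sub h1 (Dvd.dvd.mul_right ⟨n', hn'⟩ _)
      have hw : d * ((m*t % n)/d) = m*t % n := Int.mul_ediv_cancel' hdvd
      have hmodlt : m*t % n < n := Int.emod_lt_of_pos _ hn0
      have hmodge : n - v ≤ m*t % n := by linarith
      simp only [Finset.mem_coe, Finset.mem_product, Finset.mem_Icc]
      refine ⟨⟨?_, ?_⟩, Int.ediv_nonneg (by linarith) hn'0.le, ?_⟩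
      · -- lower bound on w
        by_contra hcon
        push_neg at hcon
        have hcon' : (m*t % n)/d ≤ n' - v/d - 1 := by omega
        have h1 : d * ((m*t % n)/d) ≤ d * (n' - v/d - 1) :=
          mul_le_mul_of_nonneg_left hcon' hd0.le
        have h2 : v < (v/d + 1) * d := Int.lt_ediv_add_one_mul_self v hd0
        nlinarith [hw, hn']
      · -- upper bound on w
        have : d * ((m*t % n)/d) < d * n' := by rw [hw, ← hn']; exact hmodlt
        have := lt_of_mul_lt_mul_left this hd0.le
        omega
      · -- m / n' ≤ a
        have h1 : m / n' ≤ s / n' := Int.ediv_le_ediv hn'0 hm2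
        have h2 : s / n' = a := by
          rw [hseq, add_comm, mul_comm,
            Int.add_mul_ediv_left b a hn'0.ne',
            Int.ediv_eq_zero_of_lt hb0 (by omega)]
          ring
        omega
    · intro m1 hm1 m2 hm2 heq
      simp only [Finset.mem_coe, Finset.mem_filter, Finset.mem_Icc] at hm1 hm2
      simp only [Prod.mk.injEq] at heq
      obtain ⟨he1, he2⟩ := heq
      have hdvd1 : d ∣ m1*t % n := by
        rw [Int.emod_def]
        exact dvd_sub (Dvd.dvd.mul_left ⟨t', ht'⟩ m1) (Dvd.dvd.mul_right ⟨n', hn'⟩ _)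
      have hdvd2 : d ∣ m2*t % n := by
        rw [Int.emod_def]
        exact dvd_sub (Dvd.dvd.mul_left ⟨t', ht'⟩ m2) (Dvd.dvd.mul_right ⟨n', hn'⟩ _)
      have hmodeq : m1*t % n = m2*t % n := by
        rw [← Int.mul_ediv_cancel' hdvd1, ← Int.mul_ediv_cancel' hdvd2, he1]
      have hdvdn : n ∣ m1*t - m2*t := Int.ModEq.dvd (Int.ModEq.symm hmodeq)
      have hdvdn' : n' ∣ (m1 - m2) * t' := by
        have h3 : m1*t - m2*t = d * ((m1 - m2) * t') := by rw [ht']; ring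
        rw [hn', h3] at hdvdn
        exact (mul_dvd_mul_iff_left hd0.ne').mp hdvdn
      have hdvdm : n' ∣ m1 - m2 := hcop.dvd_of_dvd_mul_right hdvdn'
      have hmod : m1 % n' = m2 % n' := Int.ModEq.symm (Int.modEq_iff_dvd.mpr hdvdm)
      have e1 := Int.mul_ediv_add_emod m1 n'
      have e2 := Int.mul_ediv_add_emod m2 n'
      rw [he2, hmod] at e1
      linarith
  have hcard2 : (((Finset.Icc (n' - v/d) (n' - 1)) ×ˢ (Finset.Icc (0:ℤ) a)).card : ℤ)
      = (v/d) * (a + 1) := by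
    rw [Finset.card_product, Int.card_Icc, Int.card_Icc]
    push_cast
    rw [Int.toNat_of_nonneg (by omega), Int.toNat_of_nonneg (by omega)]
    ring
  calc (((Finset.Icc (1:ℤ) s).filter (fun m => n - m*t % n ≤ v)).card : ℤ)
      ≤ (v/d) * (a + 1) := by rw [← hcard2]; exact_mod_cast hcard
    _ ≤ (v/d) * d := mul_le_mul_of_nonneg_left (by omega) hvd0
    _ ≤ v := Int.ediv_mul_le v hd0.ne'

lemma modsum (s n t : ℤ) (hs : 1 ≤ s) (hn : n = 2*s+1) :
    2 * ∑ m ∈ Finset.Icc (1:ℤ) s, (m*t % n) ≤ 2*s*n - s*(s+1) := by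
  have hn0 : (0:ℤ) < n := by omega
  have hcardIcc : ((Finset.Icc (1:ℤ) s).card : ℤ) = s := by
    rw [Int.card_Icc]; rw [Int.toNat_of_nonneg (by omega)]; ring
  -- key1 : pointwise lower bound on the count of m with v ≤ g m
  have key1 : ∀ v ∈ Finset.Icc (1:ℤ) s,
      (s + 1 - v) ≤ (((Finset.Icc (1:ℤ) s).filter (fun m => v ≤ n - m*t % n)).card : ℤ) := by
    intro v hv
    simp only [Finset.mem_Icc] at hv
    have hsplit := Finset.card_filter_add_card_filter_not
      (s := Finset.Icc (1:ℤ) s) (p := fun m => v ≤ n - m*t % n)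
    have hcs := count_small s n t (v-1) hs hn (by omega)
    have hneg : ((Finset.Icc (1:ℤ) s).filter (fun m => ¬ (v ≤ n - m*t % n))).card
        = ((Finset.Icc (1:ℤ) s).filter (fun m => n - m*t % n ≤ v - 1)).card := by
      congr 1
      apply Finset.filter_congr
      intro m _
      simp only [not_le]
      constructor
      · intro h; omega
      · intro h; omega
    rw [hneg] at hsplit
    have := hsplit ▸ hcardIcc
    omega
  -- key2 : sum of counts ≤ sum of g
  have key2 : ∑ v ∈ Finset.Icc (1:ℤ) s,
        ((((Finset.Icc (1:ℤ) s).filter (fun m => v ≤ n - m*t % n)).card : ℤ))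
      ≤ ∑ m ∈ Finset.Icc (1:ℤ) s, (n - m*t % n) := by
    have swap : ∑ v ∈ Finset.Icc (1:ℤ) s,
        ((((Finset.Icc (1:ℤ) s).filter (fun m => v ≤ n - m*t % n)).card : ℤ))
        = ∑ m ∈ Finset.Icc (1:ℤ) s,
          ((((Finset.Icc (1:ℤ) s).filter (fun v => v ≤ n - m*t % n)).card : ℤ)) := by
      simp only [Finset.card_filter]
      push_cast
      rw [Finset.sum_comm]
    rw [swap]
    apply Finset.sum_le_sum
    intro m hm
    simp only [Finset.mem_Icc] at hm
    have hg1 : 1 ≤ n - m*t % n := by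
      have := Int.emod_lt_of_pos (m*t) hn0
      omega
    have : (Finset.Icc (1:ℤ) s).filter (fun v => v ≤ n - m*t % n)
        = Finset.Icc (1:ℤ) (min s (n - m*t % n)) := by
      ext v
      simp only [Finset.mem_filter, Finset.mem_Icc, le_min_iff]
      omega
    rw [this, Int.card_Icc]
    rw [Int.toNat_of_nonneg (by omega)]
    omega
  -- reflection : ∑ (s+1-v) = ∑ v, hence 2∑(s+1-v) = s(s+1)
  have refl : ∑ v ∈ Finset.Icc (1:ℤ) s, (s + 1 - v) = ∑ v ∈ Finset.Icc (1:ℤ) s, v := by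
    apply Finset.sum_nbij' (i := fun v => s + 1 - v) (j := fun v => s + 1 - v)
    · intro v hv; simp only [Finset.mem_Icc] at hv ⊢; omega
    · intro v hv; simp only [Finset.mem_Icc] at hv ⊢; omega
    · intro v _; omega
    · intro v _; omega
    · intro v _; omega
  have hsum2 : 2 * ∑ v ∈ Finset.Icc (1:ℤ) s, (s + 1 - v) = s * (s+1) := by
    have : ∑ v ∈ Finset.Icc (1:ℤ) s, (s + 1 - v) + ∑ v ∈ Finset.Icc (1:ℤ) s, v
        = ∑ v ∈ Finset.Icc (1:ℤ) s, (s+1) := by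
      rw [← Finset.sum_add_distrib]
      apply Finset.sum_congr rfl
      intro v _; ring
    rw [Finset.sum_const] at this
    have hc : (Finset.Icc (1:ℤ) s).card • (s+1) = s * (s+1) := by
      rw [nsmul_eq_mul]; rw [hcardIcc]
    rw [hc] at this
    linarith [refl]
  have h1 : ∑ v ∈ Finset.Icc (1:ℤ) s, (s + 1 - v)
      ≤ ∑ v ∈ Finset.Icc (1:ℤ) s,
        ((((Finset.Icc (1:ℤ) s).filter (fun m => v ≤ n - m*t % n)).card : ℤ)) :=
    Finset.sum_le_sum key1
  have hsub : ∑ m ∈ Finset.Icc (1:ℤ) s, (n - m*t % n)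
      = s*n - ∑ m ∈ Finset.Icc (1:ℤ) s, (m*t % n) := by
    rw [Finset.sum_sub_distrib, Finset.sum_const, nsmul_eq_mul, hcardIcc]
  rw [hsub] at key2
  linarith

lemma floor_intdiv (A : ℤ) (B : ℕ) : ⌊(A:ℝ)/(B:ℝ)⌋ = A / B := by
  rw [show ((A:ℝ)/(B:ℝ)) = ((A / B : ℚ) : ℝ) by push_cast; ring, Rat.floor_cast,
    Rat.floor_intCast_div_natCast]

lemma floor_intdiv' (A B : ℤ) (hB : 0 < B) : ⌊(A:ℝ)/(B:ℝ)⌋ = A / B := by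
  obtain ⟨b, rfl⟩ := Int.eq_ofNat_of_zero_le hB.le
  rw [show (((b:ℕ):ℤ):ℝ) = ((b:ℕ):ℝ) by push_cast; ring]
  exact floor_intdiv A b

set_option maxHeartbeats 1000000 in
theorem stmt7 (r : ℕ) (hr : 2 ≤ r) (hns : ¬ IsSquare r)
    (s : ℤ) (hs : s = ⌊Real.sqrt r⌋)
    (β : ℝ) (hβ : β = Real.sqrt r - s)
    (N : ℕ)
    (hN : N = ((Finset.Icc 1 (r - 1)).filter
      (fun j : ℕ => Int.fract ((j : ℝ) / Real.sqrt r) < β)).card) :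
    (N : ℝ) < r * β + s - 1 := by
  set α := Real.sqrt r with hαdef
  have hrR : (2:ℝ) ≤ (r:ℝ) := by exact_mod_cast hr
  have hα_irr : Irrational α := by
    rw [hαdef]; exact (irrational_sqrt_natCast_iff).mpr hns
  have hα_nonneg : (0:ℝ) ≤ α := Real.sqrt_nonneg r
  have hα_sq : α^2 = r := Real.sq_sqrt (by linarith)
  have hs_le : (s:ℝ) ≤ α := hs ▸ Int.floor_le α
  have hs_lt : (s:ℝ) < α := lt_of_le_of_ne hs_le (Ne.symm (hα_irr.ne_int s))
  have hα_lt : α < s + 1 := by rw [hs]; exact_mod_cast Int.lt_floor_add_one α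
  have hs1 : (1:ℤ) ≤ s := by
    rw [hs]; rw [Int.le_floor]
    push_cast
    nlinarith [hα_sq, hα_nonneg, hrR]
  have hα_pos : (0:ℝ) < α := by
    have : (1:ℝ) ≤ s := by exact_mod_cast hs1
    linarith
  set t : ℤ := (r:ℤ) - s^2 with htdef
  have ht1 : 1 ≤ t := by
    have h1 : ((s:ℝ))^2 < (r:ℝ) := by
      have hs0 : (0:ℝ) ≤ (s:ℝ) := by exact_mod_cast (by omega : (0:ℤ) ≤ s)
      nlinarith [mul_self_lt_mul_self hs0 hs_lt, hα_sq]
    have h2 : (s^2:ℤ) < (r:ℤ) := by exact_mod_cast h1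
    omega
  have ht2 : t ≤ 2*s := by
    have h1 : (r:ℝ) < ((s:ℝ)+1)^2 := by
      nlinarith [mul_self_lt_mul_self hα_nonneg hα_lt, hα_sq]
    have h2 : (r:ℤ) < (s+1)^2 := by exact_mod_cast h1
    nlinarith
  set n : ℤ := 2*s+1 with hndef
  have hn0 : (0:ℤ) < n := by omega
  have hn0R : (0:ℝ) < (n:ℝ) := by exact_mod_cast hn0
  have hrZ : (r:ℤ) = s^2 + t := by omega
  -- strict lower bound on α
  have hstrict : (s:ℝ) + (t:ℝ)/(n:ℝ) < α := by
    have key : ((s*n + t)^2 : ℤ) < (r:ℤ) * n^2 := by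
      have hpos : 0 < t*(n-t) := mul_pos (by omega) (by omega)
      have hid : (r:ℤ)*n^2 - (s*n+t)^2 = t*(n-t) := by
        rw [hrZ, hndef]; ring
      linarith
    have h2 : ((s:ℝ) + (t:ℝ)/(n:ℝ))^2 < (r:ℝ) := by
      have hkR : (((s*n+t):ℤ):ℝ)^2 < (r:ℝ) * ((n:ℤ):ℝ)^2 := by exact_mod_cast key
      have heq : (s:ℝ) + (t:ℝ)/(n:ℝ) = (((s*n+t):ℤ):ℝ)/(n:ℝ) := by
        push_cast; field_simp
      rw [heq, div_pow, div_lt_iff₀ (by positivity)]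
      push_cast at hkR ⊢
      nlinarith [hkR]
    have hnn : (0:ℝ) ≤ (s:ℝ) + (t:ℝ)/(n:ℝ) := by
      have h1 : (0:ℝ) ≤ (t:ℝ)/(n:ℝ) := by positivity
      have h2 : (1:ℝ) ≤ (s:ℝ) := by exact_mod_cast hs1
      linarith
    rw [hαdef]
    rw [show ((r:ℝ)) = ((r:ℕ):ℝ) from rfl] at h2 ⊢
    exact (Real.lt_sqrt hnn).mpr h2
  -- the floor function
  set φ : ℤ → ℤ := fun m => ⌊(m:ℝ)*α⌋ with hφdef
  -- Part (b) : pointwise floor bound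
  have hflo : ∀ m ∈ Finset.Icc (0:ℤ) s, m*s + m*t/n ≤ φ m := by
    intro m hm
    simp only [Finset.mem_Icc] at hm
    rw [hφdef, Int.le_floor]
    have h1 : ((m*t/n : ℤ):ℝ) ≤ (m:ℝ)*(t:ℝ)/(n:ℝ) := by
      rw [← floor_intdiv' (m*t) n hn0]
      calc ((⌊((m*t:ℤ):ℝ)/(n:ℝ)⌋ : ℤ):ℝ) ≤ ((m*t:ℤ):ℝ)/(n:ℝ) := Int.floor_le _
        _ = (m:ℝ)*(t:ℝ)/(n:ℝ) := by push_cast; ring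
    have h2 : (m:ℝ)*((s:ℝ) + (t:ℝ)/(n:ℝ)) ≤ (m:ℝ)*α := by
      apply mul_le_mul_of_nonneg_left hstrict.le
      exact_mod_cast hm.1
    push_cast
    calc (m:ℝ)*(s:ℝ) + ((m*t/n : ℤ):ℝ) ≤ (m:ℝ)*(s:ℝ) + (m:ℝ)*(t:ℝ)/(n:ℝ) := by linarith
      _ = (m:ℝ)*((s:ℝ) + (t:ℝ)/(n:ℝ)) := by ring
      _ ≤ (m:ℝ)*α := h2
  -- Part (a) : fiberwise counting
  set F := (Finset.Icc 1 (r - 1)).filter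
      (fun j : ℕ => Int.fract ((j : ℝ) / α) < β) with hFdef
  have hrm1 : ((r:ℕ) - 1 : ℕ) = ((r:ℤ) - 1).toNat := by omega
  have hjr : ∀ j : ℕ, j ∈ Finset.Icc 1 (r-1) → 1 ≤ j ∧ (j:ℤ) ≤ (r:ℤ) - 1 := by
    intro j hj
    simp only [Finset.mem_Icc] at hj
    omega
  have hmem : ∀ j ∈ F, ⌊(j:ℝ)/α⌋ ∈ Finset.Icc (0:ℤ) s := by
    intro j hj
    rw [hFdef, Finset.mem_filter] at hj
    obtain ⟨hj1, hj2⟩ := hj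
    obtain ⟨hjl, hju⟩ := hjr j hj1
    simp only [Finset.mem_Icc]
    constructor
    · exact Int.floor_nonneg.mpr (by positivity)
    · have hjR : (j:ℝ) ≤ (r:ℝ) - 1 := by
        have : ((j:ℤ):ℝ) ≤ ((r:ℤ):ℝ) - 1 := by exact_mod_cast hju
        push_cast at this ⊢
        linarith
      have hdiv : (j:ℝ)/α < (s:ℝ) + 1 := by
        rw [div_lt_iff₀ hα_pos]
        nlinarith [hα_sq]
      have : ⌊(j:ℝ)/α⌋ < s + 1 :=
        Int.floor_lt.mpr (by push_cast; exact hdiv)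
      omega
  have hNsum : N = ∑ m ∈ Finset.Icc (0:ℤ) s,
      (F.filter (fun j : ℕ => ⌊(j:ℝ)/α⌋ = m)).card := by
    rw [hN]
    exact Finset.card_eq_sum_card_fiberwise hmem
  have hfib : ∀ m ∈ Finset.Icc (0:ℤ) s,
      ((F.filter (fun j : ℕ => ⌊(j:ℝ)/α⌋ = m)).card : ℤ) ≤ (r:ℤ) - 1 - φ (s-m) - φ m := by
    intro m hm
    simp only [Finset.mem_Icc] at hm
    obtain ⟨hm0, hms⟩ := hm
    have hsub : (F.filter (fun j : ℕ => ⌊(j:ℝ)/α⌋ = m)).card ≤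
        (Finset.Icc (φ m + 1) ((r:ℤ) - 1 - φ (s-m))).card := by
      refine Finset.card_le_card_of_injOn (fun j : ℕ => (j:ℤ)) ?_ ?_
      · intro j hj
        simp only [Finset.mem_coe, Finset.mem_filter] at hj
        obtain ⟨hjF, hjm⟩ := hj
        rw [hFdef, Finset.mem_filter] at hjF
        obtain ⟨hj1, hj2⟩ := hjF
        obtain ⟨hjl, hju⟩ := hjr j hj1
        have hjpos : (0:ℝ) < (j:ℝ) := by exact_mod_cast hjl
        have hmlej : (m:ℝ) * α ≤ (j:ℝ) := by
          have h1 : (m:ℝ) ≤ (j:ℝ)/α := by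
            rw [← hjm]; exact_mod_cast Int.floor_le _
          calc (m:ℝ)*α ≤ ((j:ℝ)/α)*α := mul_le_mul_of_nonneg_right h1 hα_nonneg
            _ = (j:ℝ) := by field_simp
        simp only [Finset.mem_coe, Finset.mem_Icc]
        constructor
        · -- φ m < j
          rcases eq_or_lt_of_le hm0 with h|h
          · have : φ m = 0 := by rw [hφdef, ← h]; norm_num
            omega
          · have hirr : Irrational ((m:ℝ)*α) := by
              have := hα_irr.intCast_mul (by omega : m ≠ 0)
              exact this
            have hne : (m:ℝ)*α ≠ (j:ℝ) := by
              have := hirr.ne_int (j:ℤ)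
              simpa using this
            have hlt : (m:ℝ)*α < (j:ℝ) := lt_of_le_of_ne hmlej hne
            have : ((φ m : ℤ):ℝ) < (j:ℝ) := lt_of_le_of_lt (Int.floor_le _) hlt
            have : φ m < (j:ℤ) := by exact_mod_cast this
            omega
        · -- j ≤ r - 1 - φ (s-m)
          have hfr : (j:ℝ)/α - m < α - s := by
            have h1 : Int.fract ((j:ℝ)/α) = (j:ℝ)/α - m := by
              rw [Int.fract, hjm]
            rw [h1, hβ] at hj2
            exact hj2
          have h2 : (j:ℝ) < α^2 - ((s - m:ℤ):ℝ)*α := by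
            have := (div_lt_iff₀ hα_pos).mp (by linarith : (j:ℝ)/α < α - s + m)
            push_cast
            push_cast at this
            nlinarith [this]
          have h3 : ((φ (s-m) : ℤ):ℝ) ≤ ((s-m:ℤ):ℝ)*α := Int.floor_le _
          have h4 : ((j:ℤ):ℝ) + ((φ (s-m):ℤ):ℝ) < (r:ℝ) := by
            push_cast at h2 h3 ⊢
            nlinarith [hα_sq]
          have h5 : (j:ℤ) + φ (s-m) < (r:ℤ) := by exact_mod_cast h4
          omega
      · intro j1 _ j2 _ h
        simpa using h
    calc ((F.filter (fun j : ℕ => ⌊(j:ℝ)/α⌋ = m)).card : ℤ)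
        ≤ ((Finset.Icc (φ m + 1) ((r:ℤ) - 1 - φ (s-m))).card : ℤ) := by exact_mod_cast hsub
      _ ≤ (r:ℤ) - 1 - φ (s-m) - φ m := by
          rw [Int.card_Icc]
          have hnonneg : φ m + φ (s-m) ≤ (r:ℤ) - 1 := by
            have h1 : ((φ m:ℤ):ℝ) ≤ (m:ℝ)*α := Int.floor_le _
            have h2 : ((φ (s-m):ℤ):ℝ) ≤ ((s-m:ℤ):ℝ)*α := Int.floor_le _
            have h3 : (m:ℝ)*α + ((s-m:ℤ):ℝ)*α = (s:ℝ)*α := by push_cast; ring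
            have h4 : (s:ℝ)*α < (r:ℝ) := by nlinarith [hα_sq, hs_lt]
            have h5 : ((φ m:ℤ):ℝ) + ((φ (s-m):ℤ):ℝ) < (r:ℝ) := by linarith
            have h6 : φ m + φ (s-m) < (r:ℤ) := by exact_mod_cast h5
            omega
          rw [Int.toNat_of_nonneg (by omega)]
          omega
  -- sums
  set Φ : ℤ := ∑ m ∈ Finset.Icc (0:ℤ) s, φ m with hΦdef
  set G : ℤ := ∑ m ∈ Finset.Icc (0:ℤ) s, m with hGdef
  set Sdiv : ℤ := ∑ m ∈ Finset.Icc (0:ℤ) s, (m*t/n) with hSdef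
  set M₀ : ℤ := ∑ m ∈ Finset.Icc (0:ℤ) s, (m*t % n) with hMdef
  have hcard0s : ((Finset.Icc (0:ℤ) s).card : ℤ) = s + 1 := by
    rw [Int.card_Icc]; rw [Int.toNat_of_nonneg (by omega)]; ring
  have hrefl : ∀ f : ℤ → ℤ, ∑ m ∈ Finset.Icc (0:ℤ) s, f (s - m)
      = ∑ m ∈ Finset.Icc (0:ℤ) s, f m := by
    intro f
    apply Finset.sum_nbij' (i := fun m => s - m) (j := fun m => s - m)
    · intro v hv; simp only [Finset.mem_Icc] at hv ⊢; omega
    · intro v hv; simp only [Finset.mem_Icc] at hv ⊢; omega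
    · intro v _; omega
    · intro v _; omega
    · intro v _; simp
  have hNle : (N:ℤ) ≤ (s+1)*((r:ℤ)-1) - 2*Φ := by
    have h1 : (N:ℤ) = ∑ m ∈ Finset.Icc (0:ℤ) s,
        ((F.filter (fun j : ℕ => ⌊(j:ℝ)/α⌋ = m)).card : ℤ) := by
      rw [hNsum]; push_cast; ring
    have h2 : (N:ℤ) ≤ ∑ m ∈ Finset.Icc (0:ℤ) s, ((r:ℤ) - 1 - φ (s-m) - φ m) := by
      rw [h1]; exact Finset.sum_le_sum hfib
    have h3 : ∑ m ∈ Finset.Icc (0:ℤ) s, ((r:ℤ) - 1 - φ (s-m) - φ m)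
        = (s+1)*((r:ℤ)-1) - 2*Φ := by
      calc ∑ m ∈ Finset.Icc (0:ℤ) s, ((r:ℤ) - 1 - φ (s-m) - φ m)
          = ∑ m ∈ Finset.Icc (0:ℤ) s, ((r:ℤ)-1) - ∑ m ∈ Finset.Icc (0:ℤ) s, φ (s-m)
            - ∑ m ∈ Finset.Icc (0:ℤ) s, φ m := by
            rw [← Finset.sum_sub_distrib, ← Finset.sum_sub_distrib]
        _ = (s+1)*((r:ℤ)-1) - Φ - Φ := by
            rw [hrefl φ, ← hΦdef, Finset.sum_const, nsmul_eq_mul, hcard0s]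
        _ = (s+1)*((r:ℤ)-1) - 2*Φ := by ring
    linarith
  have h2G : 2*G = s*(s+1) := by
    have h1 : ∑ m ∈ Finset.Icc (0:ℤ) s, (s - m) = G := hrefl (fun m => m)
    have h2 : ∑ m ∈ Finset.Icc (0:ℤ) s, (s - m) + G = (s+1)*s := by
      rw [hGdef, ← Finset.sum_add_distrib]
      have heq : ∀ m ∈ Finset.Icc (0:ℤ) s, (s - m) + m = s := fun m _ => by ring
      rw [Finset.sum_congr rfl heq, Finset.sum_const, nsmul_eq_mul, hcard0s]
    rw [h1] at h2
    linarith
  have hΦge : s*G + Sdiv ≤ Φ := by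
    have h1 : ∑ m ∈ Finset.Icc (0:ℤ) s, (m*s + m*t/n) ≤ Φ := Finset.sum_le_sum hflo
    have h2 : ∑ m ∈ Finset.Icc (0:ℤ) s, (m*s + m*t/n) = s*G + Sdiv := by
      rw [Finset.sum_add_distrib, ← Finset.sum_mul, ← hSdef, ← hGdef]
      ring
    linarith
  have hnS : n*Sdiv = t*G - M₀ := by
    rw [hSdef, hMdef, hGdef, Finset.mul_sum, Finset.mul_sum, ← Finset.sum_sub_distrib]
    apply Finset.sum_congr rfl
    intro m _
    rw [Int.emod_def]
    ring
  have hM01 : M₀ = ∑ m ∈ Finset.Icc (1:ℤ) s, (m*t % n) := by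
    rw [hMdef]
    rw [show Finset.Icc (0:ℤ) s = insert 0 (Finset.Icc 1 s) by
      ext x; simp only [Finset.mem_insert, Finset.mem_Icc]; omega]
    rw [Finset.sum_insert (by simp)]
    norm_num
  have hM := modsum s n t hs1 hndef
  rw [← hM01] at hM
  -- the integer inequality
  have hexp : (2*s+1) * ((s+1)*((s^2+t:ℤ)-1) - 2*(s*G + Sdiv)) ≤ (s^2+t)*t + (2*s+1)*(s-1) := by
    have hA : (2*s+1)*(2*Sdiv) = 2*t*G - 2*M₀ := by
      rw [← hndef]; linear_combination 2 * hnS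
    have hC1 : 2*((2*s+1)*(s*G)) = (2*s+1)*s*(s*(s+1)) := by linear_combination ((2*s+1)*s) * h2G
    have hC2 : 2*(t*G) = t*(s*(s+1)) := by linear_combination t * h2G
    have hB : 2*M₀ ≤ 2*s*(2*s+1) - s*(s+1) := by rw [hndef] at hM; linarith
    have hE : (0:ℤ) ≤ (s-t)*(s-t+1) := by
      rcases le_or_gt t s with h|h
      · nlinarith
      · nlinarith
    nlinarith [hA, hC1, hC2, hB, hE]
  have hfinal : n * ((s+1)*((r:ℤ)-1) - 2*(s*G + Sdiv)) ≤ (r:ℤ)*t + n*(s-1) := by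
    rw [hndef, hrZ]
    exact hexp
  -- pass to the reals
  have hNZ : (N:ℤ) ≤ (s+1)*((r:ℤ)-1) - 2*(s*G + Sdiv) := by linarith [hNle, hΦge]
  have hNR : (N:ℝ) * (n:ℝ) ≤ ((r:ℝ)*(t:ℝ) + (n:ℝ)*((s:ℝ)-1)) := by
    have h1 : ((N:ℤ):ℝ) * ((n:ℤ):ℝ) ≤ (((r:ℤ):ℝ)*((t:ℤ):ℝ) + ((n:ℤ):ℝ)*(((s:ℤ):ℝ)-1)) := by
      have h2 : (N:ℤ) * n ≤ (r:ℤ)*t + n*(s-1) := by nlinarith [hNZ, hfinal, hn0]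
      exact_mod_cast h2
    push_cast at h1 ⊢
    linarith
  have hrpos : (0:ℝ) < (r:ℝ) := by linarith
  have hbt : (t:ℝ) < (n:ℝ)*(α - (s:ℝ)) := by
    have := (div_lt_iff₀ hn0R).mp (show (t:ℝ)/(n:ℝ) < α - s by linarith [hstrict])
    linarith
  have hrt : (r:ℝ)*(t:ℝ) < (n:ℝ)*((r:ℝ)*(α - (s:ℝ))) := by
    calc (r:ℝ)*(t:ℝ) < (r:ℝ)*((n:ℝ)*(α - (s:ℝ))) := by
          exact mul_lt_mul_of_pos_left hbt hrpos
      _ = (n:ℝ)*((r:ℝ)*(α - (s:ℝ))) := by ring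
  have hfinR : (N:ℝ) * (n:ℝ) < ((r:ℝ)*(α - (s:ℝ)) + (s:ℝ) - 1) * (n:ℝ) := by
    calc (N:ℝ) * (n:ℝ) ≤ (r:ℝ)*(t:ℝ) + (n:ℝ)*((s:ℝ)-1) := hNR
      _ < (n:ℝ)*((r:ℝ)*(α - (s:ℝ))) + (n:ℝ)*((s:ℝ)-1) := by linarith
      _ = ((r:ℝ)*(α - (s:ℝ)) + (s:ℝ) - 1) * (n:ℝ) := by ring
  have := lt_of_mul_lt_mul_right hfinR hn0R.le
  rw [hβ]
  linarith
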